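/- Let G be a locally compact totally disconnected group with a fixed Haar measure. If φ and ψ are locally constant compactly supported complex-valued functions on G such that π(φ) = π(ψ) for every irreducible smooth (tempered) representation π of G, then φ = ψ. (Simplified version for a finite group K: if φ, ψ : K → ℂ satisfy λ(φ) = λ(ψ) for every irreducible complex representation λ of K, then φ = ψ.) -/

import Mathlib

open Finset

/-- A representation is irreducible if the space is nonzero and the only invariant
subspaces are `⊥` and `⊤`. -/
def IrrRep {K V : Type} [Group K] [AddCommMonoid V] [Module ℂ V]
    (ρ : Representation ℂ K V) : Prop :=
  (⊥ : Submodule ℂ V) ≠ ⊤ ∧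
  ∀ W : Submodule ℂ V, (∀ k : K, ∀ v ∈ W, ρ k v ∈ W) → W = ⊥ ∨ W = ⊤

set_option linter.unusedSectionVars false

section aux

variable {K : Type} [Group K] [Fintype K]

noncomputable abbrev Rg (K : Type) [Group K] := MonoidAlgebra ℂ K

/-- The representation of `K` on a submodule `W` of the group algebra. -/
noncomputable def ρW (W : Submodule (Rg K) (Rg K)) : Representation ℂ K ↥W where
  toFun k :=
    { toFun := fun w => ⟨MonoidAlgebra.single k 1 • (w : Rg K), W.smul_mem _ w.2⟩
      map_add' := fun x y => by ext; simp [smul_add, mul_add]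
      map_smul' := fun c x => by ext; simp [smul_comm] }
  map_one' := by ext w; simp [MonoidAlgebra.one_def]
  map_mul' k l := by
    ext w
    simp [← MonoidAlgebra.single_mul_single, mul_smul, mul_assoc]

lemma ρW_irr (W : Submodule (Rg K) (Rg K)) (hW : IsSimpleModule (Rg K) W) :
    IrrRep (ρW W) := by
  constructor
  · haveI := hW.nontrivial
    exact bot_ne_top
  · intro U hU
    have hsmul : ∀ (r : Rg K) (v : ↥W), v ∈ U → r • v ∈ U := by
      intro r v hv
      induction r using MonoidAlgebra.induction_on with
      | of g =>
          have h1 : (MonoidAlgebra.of ℂ K g) • v = ρW W g v := by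
            ext; rfl
          rw [h1]; exact hU g v hv
      | add f g hf hg => rw [add_smul]; exact U.add_mem hf hg
      | smul c f hf => rw [smul_assoc]; exact U.smul_mem c hf
    let U' : Submodule (Rg K) ↥W :=
      { carrier := U
        add_mem' := fun ha hb => U.add_mem ha hb
        zero_mem' := U.zero_mem
        smul_mem' := fun r v hv => hsmul r v hv }
    haveI := hW
    have hcase : U' = ⊥ ∨ U' = ⊤ := eq_bot_or_eq_top U'
    have hres : U = U'.restrictScalars ℂ := rfl
    rcases hcase with h1 | h1
    · left; rw [hres, h1]; rfl
    · right; rw [hres, h1]; rfl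

end aux


/-- If `φ, ψ : K → ℂ` satisfy `λ(φ) = λ(ψ)` for every irreducible complex
representation `λ` of the finite group `K`, then `φ = ψ`. -/
theorem stmt0 {K : Type} [Group K] [Fintype K] (φ ψ : K → ℂ)
    (h : ∀ (V : Type) [AddCommGroup V] [Module ℂ V] (ρ : Representation ℂ K V),
      IrrRep ρ → (∑ k : K, φ k • ρ k) = ∑ k : K, ψ k • ρ k) :
    φ = ψ := by
  classical
  haveI : Invertible (Fintype.card K : ℂ) :=
    invertibleOfNonzero (Nat.cast_ne_zero.2 Fintype.card_ne_zero)
  set b : Rg K := ∑ k : K, φ k • MonoidAlgebra.single k 1 with hb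
  set c : Rg K := ∑ k : K, ψ k • MonoidAlgebra.single k 1 with hc
  -- on each simple submodule, b and c act the same
  have key : ∀ W : Submodule (Rg K) (Rg K), IsSimpleModule (Rg K) W →
      ∀ x ∈ W, b • x = c • x := by
    intro W hW x hx
    have heq := h ↥W (ρW W) (ρW_irr W hW)
    have := congrArg (fun f : ↥W →ₗ[ℂ] ↥W => ((f ⟨x, hx⟩ : ↥W) : Rg K)) heq
    simp only [LinearMap.sum_apply, LinearMap.smul_apply] at this
    have hL : ∀ (θ : K → ℂ), ((((∑ k : K, θ k • (ρW W k : ↥W →ₗ[ℂ] ↥W)) ⟨x, hx⟩ : ↥W) : Rg K))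
        = (∑ k : K, θ k • (MonoidAlgebra.single k 1 : Rg K)) • x := by
      intro θ
      rw [Finset.sum_smul]
      simp only [LinearMap.sum_apply, LinearMap.smul_apply]
      rw [AddSubmonoidClass.coe_finset_sum]
      refine Finset.sum_congr rfl fun k _ => ?_
      have hk : ((ρW W k ⟨x, hx⟩ : ↥W) : Rg K) = (MonoidAlgebra.single k 1 : Rg K) • x := rfl
      rw [Submodule.coe_smul_of_tower, hk, smul_assoc]
    have h1 := hL φ
    have h2 := hL ψ
    rw [heq] at h1
    rw [h1] at h2
    rw [hb, hc]
    exact h2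
  -- b = c
  have hbc : b = c := by
    have htop : (1 : Rg K) ∈
        ⨆ W : ↥{m : Submodule (Rg K) (Rg K) | IsSimpleModule (Rg K) ↥m}, (W : Submodule (Rg K) (Rg K)) := by
      rw [← sSup_eq_iSup', IsSemisimpleModule.sSup_simples_eq_top (Rg K) (Rg K)]
      trivial
    have : b • (1 : Rg K) = c • (1 : Rg K) := by
      refine Submodule.iSup_induction (motive := fun x => b • x = c • x) _ htop (fun W x hx => key W W.2 x hx) (by simp) ?_
      intro x y hxy hy
      simp only [smul_add, hxy, hy]
    simpa using this
  -- conclude φ = ψ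
  funext k0
  rw [hb, hc] at hbc
  have hbc2 : (∑ k : K, φ k • Finsupp.single k (1 : ℂ)) = ∑ k : K, ψ k • Finsupp.single k (1 : ℂ) := by
    have := congrArg MonoidAlgebra.coeff hbc
    rw [MonoidAlgebra.coeff_sum, MonoidAlgebra.coeff_sum] at this
    simp only [MonoidAlgebra.coeff_smul, MonoidAlgebra.coeff_single] at this
    exact this
  have := DFunLike.congr_fun hbc2 k0
  classical
  simpa [Finsupp.finset_sum_apply, Finsupp.smul_apply, Finsupp.single_apply,
    Finset.sum_ite_eq'] using this
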